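/- arXiv:1708.00219 — 7 statements merged into one kernel-verified Lean document; each statement's English description precedes it below -/
import Mathlib

section
/- Let G be a connected finite simple graph of order n ≥ 2 whose maximum degree satisfies Δ(G) ≥ n − 2, and let k ≥ 2 be an integer. Then G has a total [1,2]-set and γ_{t[1,2]}(G) = γ_{t[1,k]}(G) = 2. -/
open SimpleGraph

/-- The lexicographic product of two simple graphs. -/
def SimpleGraph.lexProd {V W : Type*} (G : SimpleGraph V) (H : SimpleGraph W) :
    SimpleGraph (V × W) where
  Adj p q := G.Adj p.1 q.1 ∨ (p.1 = q.1 ∧ H.Adj p.2 q.2)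
  symm := by
    constructor
    rintro p q (h | ⟨e, h⟩)
    · exact Or.inl h.symm
    · exact Or.inr ⟨e.symm, h.symm⟩
  loopless := by
    constructor
    rintro p (h | ⟨_, h⟩)
    · exact G.irrefl h
    · exact H.irrefl h

/-- The `H`-layer of the product over a vertex `v` of `G`: all pairs with first
coordinate `v`. -/
def layer {V W : Type*} (v : V) : Set (V × W) := {p | p.1 = v}

/-- `S` is a `[1,k]`-set of `G`: every vertex outside `S` has at least `1` and at
most `k` neighbors in `S`. -/
def IsOneK {V : Type*} (G : SimpleGraph V) (k : ℕ) (S : Set V) : Prop :=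
  ∀ v ∉ S, 1 ≤ (G.neighborSet v ∩ S).ncard ∧ (G.neighborSet v ∩ S).ncard ≤ k

/-- `S` is a total `[1,k]`-set of `G`: every vertex has at least `1` and at most `k`
neighbors in `S`. -/
def IsTotalOneK {V : Type*} (G : SimpleGraph V) (k : ℕ) (S : Set V) : Prop :=
  ∀ v, 1 ≤ (G.neighborSet v ∩ S).ncard ∧ (G.neighborSet v ∩ S).ncard ≤ k

/-- `S` is an independent `[1,k]`-set of `G`. -/
def IsIndepOneK {V : Type*} (G : SimpleGraph V) (k : ℕ) (S : Set V) : Prop :=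
  IsOneK G k S ∧ ∀ v ∈ S, ∀ w ∈ S, ¬ G.Adj v w

/-- `S` is `j`-dependent: every vertex of `S` has at most `j` neighbors in `S`. -/
def IsJDep {V : Type*} (G : SimpleGraph V) (j : ℕ) (S : Set V) : Prop :=
  ∀ v ∈ S, (G.neighborSet v ∩ S).ncard ≤ j

/-- `S` is an efficient dominating set of `G`. -/
def IsEffDom {V : Type*} (G : SimpleGraph V) (S : Set V) : Prop :=
  (∀ v ∉ S, (G.neighborSet v ∩ S).ncard = 1) ∧ ∀ v ∈ S, (G.neighborSet v ∩ S).ncard = 0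

/-- Membership in `SD^j_{[1,k]}(G)`: a `j`-dependent `[1,k]`-set such that every
vertex of `S` with no neighbor in `S` is at distance at least `3` from every other
vertex of `S`. -/
def InSD {V : Type*} (G : SimpleGraph V) (k j : ℕ) (S : Set V) : Prop :=
  IsOneK G k S ∧ IsJDep G j S ∧
    ∀ v ∈ S, (G.neighborSet v ∩ S).ncard = 0 → ∀ v' ∈ S, v' ≠ v → 3 ≤ G.dist v v'

/-- The `[1,k]`-domination number `γ_{[1,k]}`. -/
noncomputable def gammaOneK {V : Type*} (G : SimpleGraph V) (k : ℕ) : ℕ :=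
  sInf {n | ∃ S : Set V, IsOneK G k S ∧ S.ncard = n}

/-- The total `[1,k]`-domination number `γ_{t[1,k]}`. -/
noncomputable def gammaTotalOneK {V : Type*} (G : SimpleGraph V) (k : ℕ) : ℕ :=
  sInf {n | ∃ S : Set V, IsTotalOneK G k S ∧ S.ncard = n}

/-- The `[1,k]`-independence number `γ_{i[1,k]}`. -/
noncomputable def gammaIndepOneK {V : Type*} (G : SimpleGraph V) (k : ℕ) : ℕ :=
  sInf {n | ∃ S : Set V, IsIndepOneK G k S ∧ S.ncard = n}

/-- `D` is a dominating set of `G`. -/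
def IsDomSet {V : Type*} (G : SimpleGraph V) (D : Set V) : Prop :=
  ∀ v ∉ D, ∃ u ∈ D, G.Adj v u

/-- `D` is a total dominating set of `G`. -/
def IsTotalDomSet {V : Type*} (G : SimpleGraph V) (D : Set V) : Prop :=
  ∀ v, ∃ u ∈ D, G.Adj v u

/-- The domination number `γ`. -/
noncomputable def gammaDom {V : Type*} (G : SimpleGraph V) : ℕ :=
  sInf {n | ∃ D : Set V, IsDomSet G D ∧ D.ncard = n}

/-- The total domination number `γ_t`. -/
noncomputable def gammaTotalDom {V : Type*} (G : SimpleGraph V) : ℕ :=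
  sInf {n | ∃ D : Set V, IsTotalDomSet G D ∧ D.ncard = n}

section Aux

variable {V : Type*} [Fintype V] (G : SimpleGraph V) [DecidableRel G.Adj]

lemma pair_ncard_le_two (v u : V) : ({v, u} : Set V).ncard ≤ 2 := by
  have := Set.ncard_insert_le v ({u} : Set V)
  simpa [Set.ncard_singleton] using this

lemma total_pair (v u : V) (hvu : G.Adj v u)
    (hdom : ∀ w, w ≠ v → w ≠ u → G.Adj w v ∨ G.Adj w u) :
    IsTotalOneK G 2 ({v, u} : Set V) := by
  intro w
  constructor
  · rw [show (1:ℕ) ≤ _ ↔ _ from Set.ncard_pos (Set.toFinite _)]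
    by_cases h1 : w = v
    · exact ⟨u, by simp [h1, hvu, SimpleGraph.mem_neighborSet]⟩
    · by_cases h2 : w = u
      · exact ⟨v, by simp [h2, hvu.symm, SimpleGraph.mem_neighborSet]⟩
      · rcases hdom w h1 h2 with h | h
        · exact ⟨v, by simp [h, SimpleGraph.mem_neighborSet]⟩
        · exact ⟨u, by simp [h, SimpleGraph.mem_neighborSet]⟩
  · exact le_trans (Set.ncard_le_ncard Set.inter_subset_right (Set.toFinite _))
      (pair_ncard_le_two v u)

lemma two_le_of_total [Nonempty V] {k : ℕ} {S : Set V} (hS : IsTotalOneK G k S) :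
    2 ≤ S.ncard := by
  obtain ⟨s, hs⟩ := (Set.ncard_pos (Set.toFinite _)).mp (hS (Classical.arbitrary V)).1
  obtain ⟨t, ht⟩ := (Set.ncard_pos (Set.toFinite _)).mp (hS s).1
  have hts : t ≠ s := fun h => G.loopless.irrefl s (h ▸ ht.1)
  exact (Set.one_lt_ncard_iff (Set.toFinite _)).mpr ⟨t, s, ht.2, hs.2, hts⟩

end Aux

/-- A connected graph of order `n ≥ 2` with `Δ(G) ≥ n - 2` has a total
`[1,2]`-set and `γ_{t[1,2]}(G) = γ_{t[1,k]}(G) = 2` for every `k ≥ 2`. -/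
theorem stmt0 {V : Type*} [Fintype V] (G : SimpleGraph V) [DecidableRel G.Adj]
    (hconn : G.Connected) (hn : 2 ≤ Fintype.card V)
    (hdeg : Fintype.card V - 2 ≤ G.maxDegree) (k : ℕ) (hk : 2 ≤ k) :
    (∃ S : Set V, IsTotalOneK G 2 S) ∧
      gammaTotalOneK G 2 = 2 ∧ gammaTotalOneK G k = 2 := by
  classical
  haveI : Nonempty V := Fintype.card_pos_iff.mp (by omega)
  obtain ⟨v, hv⟩ := G.exists_maximal_degree_vertex
  have hdv : Fintype.card V - 2 ≤ G.degree v := hv ▸ hdeg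
  -- find u adjacent to v such that {v,u} totally dominates
  have key : ∃ u, G.Adj v u ∧ ∀ w, w ≠ v → w ≠ u → G.Adj w v ∨ G.Adj w u := by
    by_cases hall : ∀ w, w ≠ v → G.Adj v w
    · obtain ⟨u, hu⟩ := Fintype.exists_ne_of_one_lt_card (by omega) v
      exact ⟨u, hall u hu, fun w hw _ => Or.inl (hall w hw).symm⟩
    · push_neg at hall
      obtain ⟨x, hxv, hvx⟩ := hall
      have huniq : ∀ y, y ≠ v → ¬ G.Adj v y → y = x := by
        intro y hyv hvy
        by_contra hyx
        have hdisj : Disjoint (G.neighborFinset v) ({v, x, y} : Finset V) := by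
          rw [Finset.disjoint_right]
          intro a ha
          simp only [Finset.mem_insert, Finset.mem_singleton] at ha
          rw [SimpleGraph.mem_neighborFinset]
          rcases ha with rfl | rfl | rfl
          · exact G.loopless.irrefl a
          · exact hvx
          · exact hvy
        have hcard3 : ({v, x, y} : Finset V).card = 3 := by
          rw [Finset.card_insert_of_notMem (by simp [Ne.symm hxv, Ne.symm hyv]),
            Finset.card_insert_of_notMem (by simp only [Finset.mem_singleton]; exact fun h => hyx h.symm),
            Finset.card_singleton]
        have hle : G.degree v + 3 ≤ Fintype.card V := by
          rw [← hcard3, ← SimpleGraph.card_neighborFinset_eq_degree,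
            ← Finset.card_union_of_disjoint hdisj]
          exact Finset.card_le_univ _
        omega
      obtain ⟨p⟩ := hconn x v
      cases p with
      | nil => exact absurd rfl hxv
      | @cons _ u _ h q =>
        have hux : u ≠ x := fun e => G.loopless.irrefl x (e ▸ h)
        have huv : u ≠ v := fun e => hvx (e ▸ h).symm
        have hvu : G.Adj v u := by
          by_contra hc
          exact hux (huniq u huv hc)
        refine ⟨u, hvu, fun w hwv hwu => ?_⟩
        by_cases hwx : w = x
        · exact Or.inr (hwx ▸ h)
        · have : G.Adj v w := by
            by_contra hc
            exact hwx (huniq w hwv hc)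
          exact Or.inl this.symm
  obtain ⟨u, hvu, hdom⟩ := key
  have hS2 : IsTotalOneK G 2 ({v, u} : Set V) := total_pair G v u hvu hdom
  have hSk : IsTotalOneK G k ({v, u} : Set V) :=
    fun w => ⟨(hS2 w).1, le_trans (hS2 w).2 hk⟩
  have hcard : ({v, u} : Set V).ncard = 2 := Set.ncard_pair (G.ne_of_adj hvu)
  have final : ∀ k', IsTotalOneK G k' ({v, u} : Set V) → gammaTotalOneK G k' = 2 := by
    intro k' h
    unfold gammaTotalOneK
    have hmem : (2:ℕ) ∈ {n | ∃ S : Set V, IsTotalOneK G k' S ∧ S.ncard = n} :=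
      ⟨_, h, hcard⟩
    refine le_antisymm (Nat.sInf_le hmem) ?_
    obtain ⟨S', hS', hc⟩ := Nat.sInf_mem (⟨2, hmem⟩ : Set.Nonempty _)
    exact hc ▸ two_le_of_total G hS'
  exact ⟨⟨_, hS2⟩, final 2 hS2, final k hSk⟩
end

section
/- Let T be a finite tree with at least two vertices whose complement graph T̄ is connected, and let k ≥ 2 be an integer. Then γ_{t[1,2]}(T̄) = γ_{t[1,k]}(T̄) = 2. -/
open SimpleGraph

private lemma two_paths_absurd {V : Type*} {T : SimpleGraph V} (h : T.IsTree) {x y : V}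
    (p q : T.Walk x y) (hp : p.IsPath) (hq : q.IsPath) (hl : p.length ≠ q.length) : False := by
  obtain ⟨r, _, hun⟩ := h.existsUnique_path x y
  exact hl (by rw [hun p hp, hun q hq])

private lemma conn_first_edge {V : Type*} {G : SimpleGraph V} (h : G.Connected) {x y : V}
    (hxy : x ≠ y) : ∃ z, G.Adj x z := by
  obtain ⟨w⟩ := h.preconnected x y
  cases w with
  | nil => exact absurd rfl hxy
  | cons h p => exact ⟨_, h⟩

private lemma exists_good_pair {V : Type*} [Fintype V] (T : SimpleGraph V) (htree : T.IsTree)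
    (hn : 2 ≤ Fintype.card V) (hconn : Tᶜ.Connected) :
    ∃ a b, a ≠ b ∧ ¬T.Adj a b ∧ ∀ v, ¬(T.Adj v a ∧ T.Adj v b) := by
  by_contra hno
  push_neg at hno
  -- no triangles in a tree
  have notri : ∀ {u v w : V}, T.Adj u v → T.Adj u w → T.Adj v w → False := by
    intro u v w huv huw hvw
    refine two_paths_absurd htree (Walk.cons hvw Walk.nil)
      (Walk.cons huv.symm (Walk.cons huw Walk.nil)) ?_ ?_ (by simp)
    · simp [Walk.isPath_def, hvw.ne]
    · simp [Walk.isPath_def, huv.ne, huw.ne, hvw.ne, huv.ne']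
  -- an edge x ~ y
  obtain ⟨x, x', hxx'⟩ := Fintype.exists_pair_of_one_lt_card (α := V) (by omega)
  obtain ⟨y, hxy⟩ := conn_first_edge htree.isConnected hxx'
  -- every other vertex is adjacent to x or to y
  have key : ∀ v, v ≠ x → v ≠ y → T.Adj x v ∨ T.Adj y v := by
    intro v hvx hvy
    by_contra hcon
    push_neg at hcon
    obtain ⟨hc1, hc2⟩ := hcon
    obtain ⟨c, hcx, hcv⟩ := hno x v (Ne.symm hvx) hc1
    obtain ⟨d, hdy, hdv⟩ := hno y v (Ne.symm hvy) hc2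
    have hcy : ¬T.Adj c y := fun h => notri hcx h hxy
    have hcney : c ≠ y := by rintro rfl; exact hc2 hcv
    have hdx : ¬T.Adj d x := fun h => notri hdy h hxy.symm
    have hdnex : d ≠ x := by rintro rfl; exact hc1 hdv
    have hcd : c ≠ d := by rintro rfl; exact hcy hdy
    refine two_paths_absurd htree (Walk.cons hxy Walk.nil)
      (Walk.cons hcx.symm (Walk.cons hcv (Walk.cons hdv.symm (Walk.cons hdy Walk.nil))))
      ?_ ?_ (by simp)
    · simp [Walk.isPath_def, hxy.ne]
    · simp [Walk.isPath_def, hcx.ne, hcx.ne', hcv.ne, hdv.ne, hdv.ne', hdy.ne, hxy.ne, hcney, hcd,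
        Ne.symm hvx, Ne.symm hdnex, hvy]
  by_cases hA : ∃ a, T.Adj x a ∧ a ≠ y
  · by_cases hB : ∃ b, T.Adj y b ∧ b ≠ x
    · -- both x and y have private neighbors: get a forbidden configuration
      obtain ⟨a, hax, hay⟩ := hA
      obtain ⟨b, hby, hbx⟩ := hB
      have hanay : ¬T.Adj a y := fun h => notri hax hxy h
      have hbnax : ¬T.Adj b x := fun h => notri hby hxy.symm h
      have hab : a ≠ b := by rintro rfl; exact hanay hby.symm
      by_cases habadj : T.Adj a b
      · refine two_paths_absurd htree (Walk.cons hxy Walk.nil)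
          (Walk.cons hax (Walk.cons habadj (Walk.cons hby.symm Walk.nil))) ?_ ?_ (by simp)
        · simp [Walk.isPath_def, hxy.ne]
        · simp [Walk.isPath_def, hax.ne, habadj.ne, hby.ne, hby.ne', hxy.ne, hay, Ne.symm hbx]
      · obtain ⟨e, hea, heb⟩ := hno a b hab habadj
        have henx : e ≠ x := by rintro rfl; exact hbnax heb.symm
        have heny : e ≠ y := by rintro rfl; exact hanay hea.symm
        refine two_paths_absurd htree (Walk.cons hxy Walk.nil)
          (Walk.cons hax (Walk.cons hea.symm (Walk.cons heb (Walk.cons hby.symm Walk.nil))))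
          ?_ ?_ (by simp)
        · simp [Walk.isPath_def, hxy.ne]
        · simp [Walk.isPath_def, hax.ne, hea.ne, hea.ne', heb.ne, hby.ne, hby.ne', hxy.ne, hay, hab,
            Ne.symm henx, heny, Ne.symm hbx]
    · -- y has no neighbor besides x : x is universal, contradicting connected complement
      push_neg at hB
      have huniv : ∀ v, v ≠ x → T.Adj x v := by
        intro v hvx
        by_cases hvy : v = y
        · exact hvy ▸ hxy
        · rcases key v hvx hvy with h | h
          · exact h
          · exact absurd (hB v h) hvx
      obtain ⟨z, hz⟩ := conn_first_edge hconn hxy.ne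
      rw [compl_adj] at hz
      exact hz.2 (huniv z (Ne.symm hz.1))
  · -- x has no neighbor besides y : y is universal
    push_neg at hA
    have huniv : ∀ v, v ≠ y → T.Adj y v := by
      intro v hvy
      by_cases hvx : v = x
      · exact hvx ▸ hxy.symm
      · rcases key v hvx hvy with h | h
        · exact absurd (hA v h) hvy
        · exact h
    obtain ⟨z, hz⟩ := conn_first_edge hconn hxy.ne'
    rw [compl_adj] at hz
    exact hz.2 (huniv z (Ne.symm hz.1))

/-- If `T` is a tree on at least two vertices whose complement is
connected, then `γ_{t[1,2]}(T̄) = γ_{t[1,k]}(T̄) = 2` for every `k ≥ 2`. -/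
theorem stmt2 {V : Type*} [Fintype V] (T : SimpleGraph V) (htree : T.IsTree)
    (hn : 2 ≤ Fintype.card V) (hconn : Tᶜ.Connected) (k : ℕ) (hk : 2 ≤ k) :
    gammaTotalOneK Tᶜ 2 = 2 ∧ gammaTotalOneK Tᶜ k = 2 := by
  obtain ⟨a, b, hab, hnadj, hcom⟩ := exists_good_pair T htree hn hconn
  set S : Set V := {a, b} with hSdef
  have hS2 : S.ncard = 2 := Set.ncard_pair hab
  have hTot : ∀ k', 2 ≤ k' → IsTotalOneK Tᶜ k' S := by
    intro k' hk' v
    constructor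
    · have hnon : (Tᶜ.neighborSet v ∩ S).Nonempty := by
        by_cases hva : v = a
        · exact ⟨b, by simp [mem_neighborSet, compl_adj, hva, hab, hnadj], Or.inr rfl⟩
        · by_cases hvb : v = b
          · have hba : ¬T.Adj b a := fun h => hnadj h.symm
            exact ⟨a, by simp [mem_neighborSet, compl_adj, hvb, Ne.symm hab, hba], Or.inl rfl⟩
          · rcases not_and_or.1 (hcom v) with h | h
            · exact ⟨a, by simp [mem_neighborSet, compl_adj, hva, h], Or.inl rfl⟩
            · exact ⟨b, by simp [mem_neighborSet, compl_adj, hvb, h], Or.inr rfl⟩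
      exact (Set.ncard_pos (Set.toFinite _)).2 hnon
    · calc (Tᶜ.neighborSet v ∩ S).ncard ≤ S.ncard :=
            Set.ncard_le_ncard Set.inter_subset_right (Set.toFinite _)
        _ = 2 := hS2
        _ ≤ k' := hk'
  have hlow : ∀ (k' : ℕ) (S' : Set V), IsTotalOneK Tᶜ k' S' → 2 ≤ S'.ncard := by
    intro k' S' h
    have hne : Nonempty V := Fintype.card_pos_iff.1 (by omega)
    obtain ⟨v0⟩ := hne
    obtain ⟨u, hu⟩ := (Set.ncard_pos (Set.toFinite _)).1 (h v0).1
    obtain ⟨w, hw⟩ := (Set.ncard_pos (Set.toFinite _)).1 (h u).1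
    exact (Set.one_lt_ncard (Set.toFinite _)).2
      ⟨u, hu.2, w, hw.2, (((Tᶜ).mem_neighborSet u w).1 hw.1).ne⟩
  have hgam : ∀ k', 2 ≤ k' → gammaTotalOneK Tᶜ k' = 2 := by
    intro k' hk'
    rw [gammaTotalOneK]
    have hmem : 2 ∈ {n | ∃ S : Set V, IsTotalOneK Tᶜ k' S ∧ S.ncard = n} := ⟨S, hTot k' hk', hS2⟩
    refine le_antisymm (Nat.sInf_le hmem) ?_
    obtain ⟨S', hS', hcard⟩ := Nat.sInf_mem (⟨2, hmem⟩ : Set.Nonempty _)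
    exact hcard ▸ hlow k' S' hS'
  exact ⟨hgam 2 le_rfl, hgam k hk⟩
end

section
/- Let k ≥ 2 be an integer and let G be a path P_n with n ≥ 2 or a cycle C_n with n ≥ 3. Then γ_{[1,k]}(G) = γ_{i[1,k]}(G) = ⌈n/3⌉. -/
open SimpleGraph

section aux14

open Finset

variable {n k : ℕ}

lemma aux_onek_iff (hk : 2 ≤ k) (G : SimpleGraph (Fin n))
    (hdeg : ∀ v, (G.neighborSet v).ncard ≤ 2) (S : Set (Fin n)) :
    IsOneK G k S ↔ IsDomSet G S := by
  constructor
  · intro h v hv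
    have h1 := (h v hv).1
    have : (G.neighborSet v ∩ S).Nonempty := by
      rw [← Set.ncard_pos (Set.toFinite _)]; omega
    obtain ⟨u, hu1, hu2⟩ := this
    exact ⟨u, hu2, hu1⟩
  · intro h v hv
    obtain ⟨u, huS, hadj⟩ := h v hv
    constructor
    · rw [Nat.one_le_iff_ne_zero, ← Nat.pos_iff_ne_zero, Set.ncard_pos (Set.toFinite _)]
      exact ⟨u, hadj, huS⟩
    · exact le_trans (le_trans (Set.ncard_le_ncard Set.inter_subset_left (Set.toFinite _))
        (hdeg v)) hk

lemma aux_dom_lower (G : SimpleGraph (Fin n))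
    (hdeg : ∀ v, (G.neighborSet v).ncard ≤ 2) (S : Set (Fin n))
    (hS : IsDomSet G S) : n ≤ 3 * S.ncard := by
  classical
  have hfin : S.Finite := Set.toFinite S
  set T : Finset (Fin n) := hfin.toFinset with hT
  have hsub : (Finset.univ : Finset (Fin n)) ⊆
      T.biUnion (fun s => insert s (G.neighborSet s).toFinite.toFinset) := by
    intro v _
    rw [Finset.mem_biUnion]
    by_cases hv : v ∈ S
    · exact ⟨v, hfin.mem_toFinset.mpr hv, Finset.mem_insert_self _ _⟩
    · obtain ⟨u, huS, hadj⟩ := hS v hv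
      refine ⟨u, hfin.mem_toFinset.mpr huS, Finset.mem_insert_of_mem ?_⟩
      rw [Set.Finite.mem_toFinset]
      exact hadj.symm
  have h1 : n ≤ (T.biUnion (fun s => insert s (G.neighborSet s).toFinite.toFinset)).card := by
    calc n = (Finset.univ : Finset (Fin n)).card := by simp
    _ ≤ _ := Finset.card_le_card hsub
  have h2 : (T.biUnion (fun s => insert s (G.neighborSet s).toFinite.toFinset)).card
      ≤ ∑ _s ∈ T, 3 := by
    refine le_trans (Finset.card_biUnion_le) (Finset.sum_le_sum ?_)
    intro s _
    refine le_trans (Finset.card_insert_le _ _) ?_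
    have h3' : (G.neighborSet s).toFinite.toFinset.card = (G.neighborSet s).ncard :=
      (Set.ncard_eq_toFinset_card _ _).symm
    have h3 := hdeg s
    omega
  have h4 : T.card = S.ncard := (Set.ncard_eq_toFinset_card _ _).symm
  have h5 : ∑ _s ∈ T, 3 = 3 * T.card := by
    rw [Finset.sum_const, smul_eq_mul, mul_comm]
  omega

lemma aux_gamma_eq (hk : 2 ≤ k) (G : SimpleGraph (Fin n))
    (hdeg : ∀ v, (G.neighborSet v).ncard ≤ 2) (S₀ : Set (Fin n))
    (hdom : IsDomSet G S₀) (hind : ∀ v ∈ S₀, ∀ w ∈ S₀, ¬ G.Adj v w)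
    (hcard : S₀.ncard = (n + 2) / 3) :
    gammaOneK G k = (n + 2) / 3 ∧ gammaIndepOneK G k = (n + 2) / 3 := by
  have hS₀ : IsOneK G k S₀ := (aux_onek_iff hk G hdeg S₀).mpr hdom
  have hlow : ∀ S : Set (Fin n), IsOneK G k S → (n + 2) / 3 ≤ S.ncard := by
    intro S hS
    have := aux_dom_lower G hdeg S ((aux_onek_iff hk G hdeg S).mp hS)
    omega
  constructor
  · refine le_antisymm (Nat.sInf_le ⟨S₀, hS₀, hcard⟩) (le_csInf ⟨_, S₀, hS₀, hcard⟩ ?_)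
    rintro m ⟨S, hS, rfl⟩
    exact hlow S hS
  · refine le_antisymm (Nat.sInf_le ⟨S₀, ⟨hS₀, hind⟩, hcard⟩)
      (le_csInf ⟨_, S₀, ⟨hS₀, hind⟩, hcard⟩ ?_)
    rintro m ⟨S, hS, rfl⟩
    exact hlow S hS.1

/-- The canonical minimum independent dominating set of `P_n`/`C_n`. -/
def pSet (n : ℕ) : Set (Fin n) := {i | i.val % 3 = 1 ∨ (n % 3 = 1 ∧ i.val = n - 1)}

lemma mem_pSet_iff (i : Fin n) : i ∈ pSet n ↔ i.val % 3 = 1 ∨ (n % 3 = 1 ∧ i.val = n - 1) :=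
  Iff.rfl

lemma aux_count1 : ∀ m : ℕ, ((Finset.range m).filter (fun i => i % 3 = 1)).card = (m + 1) / 3 := by
  intro m
  induction m with
  | zero => simp
  | succ m ih =>
    rw [Finset.range_add_one, Finset.filter_insert]
    split_ifs with h
    · rw [Finset.card_insert_of_notMem (by simp)]
      omega
    · omega

lemma pSet_ncard (hn : 1 ≤ n) : (pSet n).ncard = (n + 2) / 3 := by
  classical
  have key : (pSet n).ncard =
      ((Finset.range n).filter (fun i => i % 3 = 1 ∨ (n % 3 = 1 ∧ i = n - 1))).card := by
    rw [← Set.ncard_coe_finset, ← Set.ncard_image_of_injective (pSet n) Fin.val_injective]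
    congr 1
    ext i
    simp only [Set.mem_image, Finset.coe_filter, Finset.mem_range, Set.mem_setOf_eq,
      mem_pSet_iff]
    constructor
    · rintro ⟨j, hj, rfl⟩
      exact ⟨j.isLt, hj⟩
    · rintro ⟨h1, h2⟩
      exact ⟨⟨i, h1⟩, h2, rfl⟩
  rw [key]
  by_cases hn3 : n % 3 = 1
  · have heq : (Finset.range n).filter (fun i => i % 3 = 1 ∨ (n % 3 = 1 ∧ i = n - 1)) =
        insert (n - 1) ((Finset.range n).filter (fun i => i % 3 = 1)) := by
      ext i
      simp only [Finset.mem_filter, Finset.mem_range, Finset.mem_insert]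
      constructor
      · rintro ⟨h1, h2 | ⟨_, h3⟩⟩
        · exact Or.inr ⟨h1, h2⟩
        · exact Or.inl h3
      · rintro (rfl | ⟨h1, h2⟩)
        · exact ⟨by omega, Or.inr ⟨hn3, rfl⟩⟩
        · exact ⟨h1, Or.inl h2⟩
    rw [heq, Finset.card_insert_of_notMem (by simp; omega), aux_count1]
    omega
  · have heq : (Finset.range n).filter (fun i => i % 3 = 1 ∨ (n % 3 = 1 ∧ i = n - 1)) =
        (Finset.range n).filter (fun i => i % 3 = 1) := by
      apply Finset.filter_congr
      intro i _
      constructor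
      · rintro (h | ⟨h1, _⟩)
        · exact h
        · exact absurd h1 hn3
      · exact Or.inl
    rw [heq, aux_count1]
    omega

lemma pSet_dom_path (hn : 2 ≤ n) : IsDomSet (SimpleGraph.pathGraph n) (pSet n) := by
  intro v hv
  rw [mem_pSet_iff] at hv
  have hv1 : v.val % 3 ≠ 1 := fun h => hv (Or.inl h)
  have hv2 : ¬(n % 3 = 1 ∧ v.val = n - 1) := fun h => hv (Or.inr h)
  have hvlt := v.isLt
  have hm : v.val % 3 = 0 ∨ v.val % 3 = 1 ∨ v.val % 3 = 2 := by omega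
  rcases hm with h0 | h1 | h2
  · by_cases hend : v.val + 1 < n
    · refine ⟨⟨v.val + 1, hend⟩, ?_, ?_⟩
      · rw [mem_pSet_iff]
        left; show (v.val + 1) % 3 = 1; omega
      · rw [SimpleGraph.pathGraph_adj]
        left; rfl
    · exact absurd ⟨by omega, by omega⟩ hv2
  · exact absurd h1 hv1
  · refine ⟨⟨v.val - 1, by omega⟩, ?_, ?_⟩
    · rw [mem_pSet_iff]
      left; show (v.val - 1) % 3 = 1; omega
    · rw [SimpleGraph.pathGraph_adj]
      right; show (v.val - 1) + 1 = v.val; omega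

lemma pSet_indep_path : ∀ v ∈ pSet n, ∀ w ∈ pSet n, ¬ (SimpleGraph.pathGraph n).Adj v w := by
  intro v hv w hw hadj
  rw [mem_pSet_iff] at hv hw
  rw [SimpleGraph.pathGraph_adj] at hadj
  have h1 := v.isLt
  have h2 := w.isLt
  omega

lemma cycle_adj_val (hn : 2 ≤ n) (u v : Fin n) :
    (SimpleGraph.cycleGraph n).Adj u v ↔
      (u.val + 1) % n = v.val ∨ (v.val + 1) % n = u.val := by
  have hnz : NeZero n := ⟨by omega⟩
  rw [SimpleGraph.cycleGraph_adj']
  have h1 : (1 : Fin n).val = 1 := by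
    rw [Fin.val_one']
    exact Nat.mod_eq_of_lt (by omega)
  have key : ∀ a b : Fin n, (a - b).val = 1 ↔ (b.val + 1) % n = a.val := by
    intro a b
    have step1 : (a - b).val = 1 ↔ a - b = 1 :=
      ⟨fun h => Fin.ext (by rw [h, h1]), fun h => by rw [h, h1]⟩
    rw [step1, sub_eq_iff_eq_add, Fin.ext_iff, Fin.val_add, h1, Nat.add_comm 1 b.val]
    exact eq_comm
  rw [key, key]
  tauto

lemma pSet_dom_cycle (hn : 3 ≤ n) : IsDomSet (SimpleGraph.cycleGraph n) (pSet n) := by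
  intro v hv
  rw [mem_pSet_iff] at hv
  have hv1 : v.val % 3 ≠ 1 := fun h => hv (Or.inl h)
  have hv2 : ¬(n % 3 = 1 ∧ v.val = n - 1) := fun h => hv (Or.inr h)
  have hvlt := v.isLt
  have hm : v.val % 3 = 0 ∨ v.val % 3 = 1 ∨ v.val % 3 = 2 := by omega
  rcases hm with h0 | h1 | h2
  · by_cases hend : v.val + 1 < n
    · refine ⟨⟨v.val + 1, hend⟩, ?_, ?_⟩
      · rw [mem_pSet_iff]
        left; show (v.val + 1) % 3 = 1; omega
      · rw [cycle_adj_val (by omega)]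
        left; show (v.val + 1) % n = v.val + 1; exact Nat.mod_eq_of_lt hend
    · exact absurd ⟨by omega, by omega⟩ hv2
  · exact absurd h1 hv1
  · refine ⟨⟨v.val - 1, by omega⟩, ?_, ?_⟩
    · rw [mem_pSet_iff]
      left; show (v.val - 1) % 3 = 1; omega
    · rw [cycle_adj_val (by omega)]
      right; show (v.val - 1 + 1) % n = v.val
      rw [Nat.mod_eq_of_lt (by omega)]
      omega

lemma pSet_indep_cycle (hn : 3 ≤ n) :
    ∀ v ∈ pSet n, ∀ w ∈ pSet n, ¬ (SimpleGraph.cycleGraph n).Adj v w := by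
  intro v hv w hw hadj
  rw [mem_pSet_iff] at hv hw
  rw [cycle_adj_val (by omega)] at hadj
  have h1 := v.isLt
  have h2 := w.isLt
  have e1 : (v.val + 1) % n = v.val + 1 ∨ ((v.val + 1) % n = 0 ∧ v.val + 1 = n) := by
    rcases lt_or_eq_of_le (by omega : v.val + 1 ≤ n) with h | h
    · exact Or.inl (Nat.mod_eq_of_lt h)
    · exact Or.inr ⟨by rw [h, Nat.mod_self], h⟩
  have e2 : (w.val + 1) % n = w.val + 1 ∨ ((w.val + 1) % n = 0 ∧ w.val + 1 = n) := by
    rcases lt_or_eq_of_le (by omega : w.val + 1 ≤ n) with h | h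
    · exact Or.inl (Nat.mod_eq_of_lt h)
    · exact Or.inr ⟨by rw [h, Nat.mod_self], h⟩
  omega

lemma path_deg (v : Fin n) : ((SimpleGraph.pathGraph n).neighborSet v).ncard ≤ 2 := by
  have hsub : (SimpleGraph.pathGraph n).neighborSet v ⊆
      {u : Fin n | v.val + 1 = u.val} ∪ {u : Fin n | u.val + 1 = v.val} := by
    intro u hu
    rw [SimpleGraph.mem_neighborSet, SimpleGraph.pathGraph_adj] at hu
    exact hu
  refine le_trans (Set.ncard_le_ncard hsub (Set.toFinite _)) ?_
  refine le_trans (Set.ncard_union_le _ _) ?_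
  have a1 : {u : Fin n | v.val + 1 = u.val}.ncard ≤ 1 := by
    rw [Set.ncard_le_one (Set.toFinite _)]
    intro a ha b hb
    apply Fin.ext
    simp only [Set.mem_setOf_eq] at ha hb
    omega
  have a2 : {u : Fin n | u.val + 1 = v.val}.ncard ≤ 1 := by
    rw [Set.ncard_le_one (Set.toFinite _)]
    intro a ha b hb
    apply Fin.ext
    simp only [Set.mem_setOf_eq] at ha hb
    omega
  omega

lemma cycle_deg (hn : 3 ≤ n) (v : Fin n) :
    ((SimpleGraph.cycleGraph n).neighborSet v).ncard ≤ 2 := by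
  obtain ⟨m, rfl⟩ : ∃ m, n = m + 2 := ⟨n - 2, by omega⟩
  rw [SimpleGraph.cycleGraph_neighborSet]
  exact le_trans (Set.ncard_insert_le _ _) (by simp)

end aux14

/-- For `k ≥ 2`, the `[1,k]`-domination number and the
`[1,k]`-independence number of the path `P_n` (`n ≥ 2`) and of the cycle `C_n`
(`n ≥ 3`) both equal `⌈n/3⌉`. -/
theorem stmt4 (k : ℕ) (hk : 2 ≤ k) :
    (∀ n : ℕ, 2 ≤ n →
      gammaOneK (SimpleGraph.pathGraph n) k = (n + 2) / 3 ∧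
      gammaIndepOneK (SimpleGraph.pathGraph n) k = (n + 2) / 3) ∧
    (∀ n : ℕ, 3 ≤ n →
      gammaOneK (SimpleGraph.cycleGraph n) k = (n + 2) / 3 ∧
      gammaIndepOneK (SimpleGraph.cycleGraph n) k = (n + 2) / 3) := by
  constructor
  · intro n hn
    exact aux_gamma_eq hk _ (fun v => path_deg v) (pSet n) (pSet_dom_path hn)
      pSet_indep_path (pSet_ncard (by omega))
  · intro n hn
    exact aux_gamma_eq hk _ (cycle_deg hn) (pSet n) (pSet_dom_cycle hn)
      (pSet_indep_cycle hn) (pSet_ncard (by omega))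
end

section
/- Let G be a connected finite simple graph, H a finite simple graph, and D a total [1,2]-set of the lexicographic product G∘H. If D contains more than two vertices of some H-layer H^v, then G is the one-vertex graph K_1 and H has a total [1,2]-set. -/
open SimpleGraph

/-- If a total `[1,2]`-set `D` of `G∘H` (with `G` connected) contains
more than two vertices of some `H`-layer, then `G = K_1` and `H` has a total
`[1,2]`-set. -/
theorem stmt6 {V W : Type*} [Fintype V] [Fintype W] (G : SimpleGraph V)
    (H : SimpleGraph W) (hconn : G.Connected) (D : Set (V × W))
    (hD : IsTotalOneK (G.lexProd H) 2 D)
    (v : V) (hv : 2 < ((layer v : Set (V × W)) ∩ D).ncard) :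
    Fintype.card V = 1 ∧ ∃ S : Set W, IsTotalOneK H 2 S := by
  -- the layer intersection is nonempty, extract a witness
  obtain ⟨p0, hp0⟩ : ((layer v : Set (V × W)) ∩ D).Nonempty := by
    apply Set.nonempty_of_ncard_ne_zero; omega
  -- v has no neighbors in G
  have hno : ∀ u, ¬ G.Adj v u := by
    intro u hadj
    have hsub : (layer v : Set (V × W)) ∩ D ⊆
        (G.lexProd H).neighborSet (u, p0.2) ∩ D := by
      rintro q ⟨hq1, hq2⟩
      refine ⟨Or.inl ?_, hq2⟩
      have : q.1 = v := hq1
      rw [this]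
      exact hadj.symm
    have hle := Set.ncard_le_ncard hsub (Set.toFinite _)
    have := (hD (u, p0.2)).2
    omega
  have hall : ∀ y : V, y = v := by
    intro y
    obtain ⟨p⟩ := hconn.preconnected v y
    cases p with
    | nil => rfl
    | cons h q => exact absurd h (hno _)
  refine ⟨Fintype.card_eq_one_iff.mpr ⟨v, hall⟩, {w | (v, w) ∈ D}, ?_⟩
  intro w
  have key : (G.lexProd H).neighborSet (v, w) ∩ D =
      (fun h => (v, h)) '' (H.neighborSet w ∩ {w | (v, w) ∈ D}) := by
    ext p
    constructor
    · rintro ⟨hadj, hpD⟩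
      have hp1 : p.1 = v := hall p.1
      rcases hadj with h | ⟨_, hH⟩
      · exact absurd (hp1 ▸ h) (hno _)
      · refine ⟨p.2, ⟨hH, ?_⟩, ?_⟩
        · show (v, p.2) ∈ D
          rwa [show ((v, p.2) : V × W) = p from Prod.ext hp1.symm rfl]
        · exact Prod.ext hp1.symm rfl
    · rintro ⟨h, ⟨hH, hS⟩, rfl⟩
      exact ⟨Or.inr ⟨rfl, hH⟩, hS⟩
  have hw := hD (v, w)
  rwa [key, Set.ncard_image_of_injective _
    (fun a b h => by simpa using h)] at hw
end

section
/- Let G be a connected finite simple graph with at least two vertices, let H be a finite simple graph with no isolated vertex, and let D be a total [1,2]-set of the lexicographic product G∘H such that A_1^D ≠ ∅ and A_2^D ≠ ∅. Then: (1) for every v ∈ V(G) and every pair of vertices u', u'' ∈ V(H) with (v,u'), (v,u'') ∈ D, the set {u',u''} is a total [1,2]-set of H; (2) S' = {v ∈ V(G) : (v,u) ∈ D for some u} is a 1-dependent [1,2]-set of G; (3) for every v ∈ S' with |N_G(v) ∩ S'| = 0 and every v' ∈ S'∖{v}, the distance dist_G(v,v') ≥ 3. -/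
open SimpleGraph

/-- Let `G` be connected with at least two vertices, `H` have no
isolated vertex, and `D` be a total `[1,2]`-set of `G∘H` with `A_1^D ≠ ∅` and
`A_2^D ≠ ∅`. Then: (1) any two distinct vertices `u', u''` of `H` with `(v,u')` and
`(v,u'')` in `D` form a total `[1,2]`-set of `H`; (2) the projection `S'` of `D` is a
`1`-dependent `[1,2]`-set of `G`; (3) any `v ∈ S'` with no neighbor in `S'` is at
distance at least `3` from every other vertex of `S'`. -/
theorem stmt9 {V W : Type*} [Fintype V] [Fintype W] (G : SimpleGraph V)
    (H : SimpleGraph W) (hconn : G.Connected) (hcard : 2 ≤ Fintype.card V)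
    (hiso : ∀ w : W, (H.neighborSet w).Nonempty)
    (D : Set (V × W)) (hD : IsTotalOneK (G.lexProd H) 2 D)
    (hA1 : {p ∈ D | ((layer p.1 : Set (V × W)) ∩ D).ncard = 1}.Nonempty)
    (hA2 : {p ∈ D | ((layer p.1 : Set (V × W)) ∩ D).ncard = 2}.Nonempty) :
    (∀ v : V, ∀ u' u'' : W, (v, u') ∈ D → (v, u'') ∈ D → u' ≠ u'' →
        IsTotalOneK H 2 {u', u''}) ∧
    (IsOneK G 2 {x | ∃ u : W, (x, u) ∈ D} ∧
        IsJDep G 1 {x | ∃ u : W, (x, u) ∈ D}) ∧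
    (∀ v ∈ {x | ∃ u : W, (x, u) ∈ D},
        (G.neighborSet v ∩ {x | ∃ u : W, (x, u) ∈ D}).ncard = 0 →
          ∀ v' ∈ {x | ∃ u : W, (x, u) ∈ D}, v' ≠ v → 3 ≤ G.dist v v') := by
    classical
  have hadj : ∀ p q : V × W, (G.lexProd H).Adj p q ↔
      (G.Adj p.1 q.1 ∨ (p.1 = q.1 ∧ H.Adj p.2 q.2)) := fun _ _ => Iff.rfl
  have hub : ∀ p : V × W, (((G.lexProd H).neighborSet p) ∩ D).ncard ≤ 2 := fun p => (hD p).2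
  have hlb : ∀ p : V × W, (((G.lexProd H).neighborSet p) ∩ D).Nonempty := by
    intro p
    have h1 := (hD p).1
    exact Set.nonempty_of_ncard_ne_zero (by omega)
  have three : ∀ p a b c : V × W, (G.lexProd H).Adj p a → (G.lexProd H).Adj p b →
      (G.lexProd H).Adj p c → a ∈ D → b ∈ D → c ∈ D → a ≠ b → a ≠ c → b ≠ c → False := by
    intro p a b c pa pb pc da db dc hab hac hbc
    have hsub : ({a, b, c} : Set (V × W)) ⊆ ((G.lexProd H).neighborSet p) ∩ D := by
      intro x hx
      simp only [Set.mem_insert_iff, Set.mem_singleton_iff] at hx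
      rcases hx with rfl | rfl | rfl
      exacts [⟨pa, da⟩, ⟨pb, db⟩, ⟨pc, dc⟩]
    have h3 : (3 : ℕ) ≤ (((G.lexProd H).neighborSet p) ∩ D).ncard := by
      have hle := Set.ncard_le_ncard hsub (Set.toFinite _)
      rwa [Set.ncard_eq_three.mpr ⟨a, b, c, hab, hac, hbc, rfl⟩] at hle
    have := hub p
    omega
  have hGadj : ∀ v : V, ∃ v', G.Adj v v' := by
    intro v
    obtain ⟨v'', hne⟩ := Fintype.exists_ne_of_one_lt_card (by omega) v
    obtain ⟨p⟩ := hconn.preconnected v v''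
    cases p with
    | nil => exact absurd rfl hne
    | cons h _ => exact ⟨_, h⟩
  have F1 : ∀ (v : V) (a b c : W), (v, a) ∈ D → (v, b) ∈ D → (v, c) ∈ D →
      a ≠ b → a ≠ c → b ≠ c → False := by
    intro v a b c da db dc hab hac hbc
    obtain ⟨v', hv'⟩ := hGadj v
    exact three (v', a) (v, a) (v, b) (v, c)
      ((hadj _ _).mpr (Or.inl hv'.symm)) ((hadj _ _).mpr (Or.inl hv'.symm))
      ((hadj _ _).mpr (Or.inl hv'.symm)) da db dc
      (by simp [hab]) (by simp [hac]) (by simp [hbc])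
  have F2 : ∀ (v : V) (u : W), (v, u) ∈ D → ∀ v₁ v₂ : V, G.Adj v v₁ → G.Adj v v₂ → v₁ ≠ v₂ →
      (∃ a, (v₁, a) ∈ D) → (∃ b, (v₂, b) ∈ D) → False := by
    rintro v u hu v₁ v₂ h1 h2 h12 ⟨a, ha⟩ ⟨b, hb⟩
    obtain ⟨w, hw⟩ := hiso u
    have hw' : H.Adj u w := hw
    exact three (v, w) (v, u) (v₁, a) (v₂, b)
      ((hadj _ _).mpr (Or.inr ⟨rfl, hw'.symm⟩))
      ((hadj _ _).mpr (Or.inl h1)) ((hadj _ _).mpr (Or.inl h2))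
      hu ha hb (by simp [h1.ne]) (by simp [h2.ne]) (by simp [h12])
  have F3 : ∀ (v : V) (u : W), (v, u) ∈ D → ∀ v' : V, G.Adj v v' → ∀ a b : W,
      (v', a) ∈ D → (v', b) ∈ D → a = b := by
    intro v u hu v' hvv' a b ha hb
    by_contra hne
    obtain ⟨w, hw⟩ := hiso u
    have hw' : H.Adj u w := hw
    exact three (v, w) (v, u) (v', a) (v', b)
      ((hadj _ _).mpr (Or.inr ⟨rfl, hw'.symm⟩))
      ((hadj _ _).mpr (Or.inl hvv')) ((hadj _ _).mpr (Or.inl hvv'))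
      hu ha hb (by simp [hvv'.ne]) (by simp [hvv'.ne]) (by simp [hne])
  refine ⟨?_, ⟨?_, ?_⟩, ?_⟩
  · -- Part 1
    intro v u' u'' hu' hu'' hne w
    have hP : ∀ u : W, (v, u) ∈ D → u = u' ∨ u = u'' := by
      intro u hu
      by_contra h
      push_neg at h
      exact F1 v u u' u'' hu hu' hu'' h.1 h.2 hne
    have hnoNb : ∀ x : V, G.Adj v x → ¬ ∃ y, (x, y) ∈ D := by
      rintro x hx ⟨y, hy⟩
      exact hne (F3 x y hy v hx.symm u' u'' hu' hu'')
    constructor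
    · obtain ⟨p, hp1, hp2⟩ := hlb (v, w)
      rcases (hadj (v, w) p).mp hp1 with h | ⟨h1, h2⟩
      · exact absurd ⟨p.2, hp2⟩ (hnoNb p.1 h)
      · have hpD : (v, p.2) ∈ D := by rw [show v = p.1 from h1]; exact hp2
        have hmem : p.2 ∈ H.neighborSet w ∩ {u', u''} := by
          refine ⟨h2, ?_⟩
          rcases hP p.2 hpD with h | h <;> simp [h]
        have hpos := (Set.ncard_pos (Set.toFinite _)).mpr ⟨p.2, hmem⟩
        omega
    · have h1 : (H.neighborSet w ∩ {u', u''}).ncard ≤ ({u', u''} : Set W).ncard :=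
        Set.ncard_le_ncard Set.inter_subset_right (Set.toFinite _)
      have h2 : ({u', u''} : Set W).ncard = 2 := Set.ncard_pair hne
      omega
  · -- Part 2a : IsOneK
    intro v hv
    obtain ⟨q, hqD, -⟩ := hA1
    constructor
    · obtain ⟨p, hp1, hp2⟩ := hlb (v, q.2)
      rcases (hadj (v, q.2) p).mp hp1 with h | ⟨h1, h2⟩
      · have hmem : p.1 ∈ G.neighborSet v ∩ {x | ∃ u, (x, u) ∈ D} := ⟨h, ⟨p.2, hp2⟩⟩
        have hpos := (Set.ncard_pos (Set.toFinite _)).mpr ⟨p.1, hmem⟩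
        omega
      · exact absurd ⟨p.2, by rw [show v = p.1 from h1]; exact hp2⟩ hv
    · by_contra hgt
      push_neg at hgt
      obtain ⟨a, ha, b, hb, c, hc, hab, hac, hbc⟩ :=
        (Set.two_lt_ncard (Set.toFinite _)).mp hgt
      obtain ⟨ua, hua⟩ := ha.2
      obtain ⟨ub, hub'⟩ := hb.2
      obtain ⟨uc, huc⟩ := hc.2
      exact three (v, q.2) (a, ua) (b, ub) (c, uc)
        ((hadj _ _).mpr (Or.inl ha.1)) ((hadj _ _).mpr (Or.inl hb.1))
        ((hadj _ _).mpr (Or.inl hc.1)) hua hub' huc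
        (by simp [hab]) (by simp [hac]) (by simp [hbc])
  · -- Part 2b : IsJDep
    intro v hv
    obtain ⟨u, hu⟩ := hv
    rw [Set.ncard_le_one (Set.toFinite _)]
    intro a ha b hb
    by_contra hne
    exact F2 v u hu a b ha.1 hb.1 hne ha.2 hb.2
  · -- Part 3
    intro v hv hzero v' hv' hnev
    obtain ⟨u, hu⟩ := hv
    obtain ⟨y, hy⟩ := hv'
    have hempty : G.neighborSet v ∩ {x | ∃ u : W, (x, u) ∈ D} = ∅ :=
      (Set.ncard_eq_zero (Set.toFinite _)).mp hzero
    have hnoNb : ∀ x : V, G.Adj v x → ¬ ∃ z, (x, z) ∈ D := by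
      intro x hx hxS
      exact Set.eq_empty_iff_forall_notMem.mp hempty x ⟨hx, hxS⟩
    have hlayer2 : ∃ u₂ : W, (v, u₂) ∈ D ∧ u₂ ≠ u := by
      obtain ⟨p, hp1, hp2⟩ := hlb (v, u)
      rcases (hadj (v, u) p).mp hp1 with h | ⟨h1, h2⟩
      · exact absurd ⟨p.2, hp2⟩ (hnoNb p.1 h)
      · exact ⟨p.2, by rw [show v = p.1 from h1]; exact hp2, fun hq => H.loopless.irrefl u (hq ▸ h2)⟩
    obtain ⟨u₂, hu₂, hne2⟩ := hlayer2
    by_contra hlt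
    push_neg at hlt
    have hreach : G.Reachable v v' := hconn.preconnected v v'
    have hdpos : G.dist v v' ≠ 0 := by
      intro h0
      rcases SimpleGraph.dist_eq_zero_iff_eq_or_not_reachable.mp h0 with h | h
      · exact hnev h.symm
      · exact h hreach
    obtain ⟨p, hp⟩ := SimpleGraph.exists_walk_of_dist_ne_zero hdpos
    have hlen : p.length = 1 ∨ p.length = 2 := by omega
    have hadj01 : G.Adj v (p.getVert 1) := by
      have h := p.adj_getVert_succ (i := 0) (by omega)
      simpa using h
    rcases hlen with h1 | h2
    · have hx : p.getVert 1 = v' := by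
        have := p.getVert_length
        rwa [h1] at this
      exact hnoNb v' (hx ▸ hadj01) ⟨y, hy⟩
    · have hx2 : G.Adj (p.getVert 1) v' := by
        have h := p.adj_getVert_succ (i := 1) (by omega)
        rwa [show (1 : ℕ) + 1 = p.length by omega, p.getVert_length] at h
      exact three (p.getVert 1, u) (v, u) (v, u₂) (v', y)
        ((hadj _ _).mpr (Or.inl hadj01.symm)) ((hadj _ _).mpr (Or.inl hadj01.symm))
        ((hadj _ _).mpr (Or.inl hx2)) hu hu₂ hy
        (by simp [hne2.symm]) (by simp [hnev.symm]) (by simp [hnev.symm])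
end

section
/- Let G be a connected finite simple graph and H a nonempty finite simple graph. (i) If γ(H) = 1, then γ(G∘H) = γ(G). (ii) If G has at least two vertices and γ(H) ≥ 2, then γ(G∘H) = γ_t(G). -/
open SimpleGraph

lemma domSet_nonempty {α : Type*} [Fintype α] (K : SimpleGraph α) :
    {n | ∃ D : Set α, IsDomSet K D ∧ D.ncard = n}.Nonempty :=
  ⟨(Set.univ : Set α).ncard, Set.univ, fun v hv => absurd (Set.mem_univ v) hv, rfl⟩

/-- Let `G` be connected and `H` nonempty. (i) If `γ(H) = 1` then
`γ(G∘H) = γ(G)`. (ii) If `G` has at least two vertices and `γ(H) ≥ 2` then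
`γ(G∘H) = γ_t(G)`. -/
theorem stmt16 {V W : Type*} [Fintype V] [Fintype W] (G : SimpleGraph V)
    (H : SimpleGraph W) (hconn : G.Connected) (hW : Nonempty W) :
    (gammaDom H = 1 → gammaDom (G.lexProd H) = gammaDom G) ∧
    (2 ≤ Fintype.card V → 2 ≤ gammaDom H →
      gammaDom (G.lexProd H) = gammaTotalDom G) := by
  classical
  obtain ⟨w0⟩ := hW
  -- minimum dominating set of the product
  obtain ⟨D', hD', hD'card⟩ := Nat.sInf_mem (domSet_nonempty (G.lexProd H))
  -- projection of D' to V
  set A : Set V := Prod.fst '' D' with hA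
  have hAdom : IsDomSet G A := by
    intro v hv
    have hvD : (v, w0) ∉ D' := fun h => hv ⟨(v, w0), h, rfl⟩
    obtain ⟨⟨a, h'⟩, haD, hadj⟩ := hD' _ hvD
    rcases hadj with h | ⟨h, _⟩
    · exact ⟨a, ⟨(a, h'), haD, rfl⟩, h⟩
    · exact absurd ⟨(a, h'), haD, h ▸ rfl⟩ hv
  have hAle : gammaDom G ≤ gammaDom (G.lexProd H) := by
    calc gammaDom G ≤ A.ncard := Nat.sInf_le ⟨A, hAdom, rfl⟩
      _ ≤ D'.ncard := Set.ncard_image_le D'.toFinite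
      _ = _ := hD'card
  constructor
  · -- part (i)
    intro h1
    obtain ⟨S, hS, hScard⟩ := Nat.sInf_mem (domSet_nonempty H)
    obtain ⟨w1, rfl⟩ := Set.ncard_eq_one.mp (hScard.trans h1)
    have hw1 : ∀ h : W, h ≠ w1 → H.Adj h w1 := by
      intro h hh
      obtain ⟨u, hu, hadj⟩ := hS h (by simpa using hh)
      rwa [Set.mem_singleton_iff.mp hu] at hadj
    obtain ⟨D, hD, hDcard⟩ := Nat.sInf_mem (domSet_nonempty G)
    have hDdom : IsDomSet (G.lexProd H) ((fun v => (v, w1)) '' D) := by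
      rintro ⟨g, h⟩ hgh
      by_cases hg : g ∈ D
      · have hhw : h ≠ w1 := fun e => hgh ⟨g, hg, by rw [e]⟩
        exact ⟨(g, w1), ⟨g, hg, rfl⟩, Or.inr ⟨rfl, hw1 h hhw⟩⟩
      · obtain ⟨u, hu, hadj⟩ := hD g hg
        exact ⟨(u, w1), ⟨u, hu, rfl⟩, Or.inl hadj⟩
    have : gammaDom (G.lexProd H) ≤ gammaDom G := by
      have hinj : Function.Injective (fun v : V => (v, w1)) := fun a b h => by
        simpa using congrArg Prod.fst h
      calc gammaDom (G.lexProd H) ≤ ((fun v => (v, w1)) '' D).ncard :=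
            Nat.sInf_le ⟨_, hDdom, rfl⟩
        _ = D.ncard := Set.ncard_image_of_injective D hinj
        _ = gammaDom G := hDcard
    omega
  · -- part (ii)
    intro hV2 hH2
    -- every vertex has a neighbor
    have hnbr : ∀ v : V, ∃ u, G.Adj v u := by
      intro v
      obtain ⟨w, hw⟩ := Fintype.exists_ne_of_one_lt_card (by omega) v
      obtain ⟨p⟩ := hconn.preconnected w v
      exact ⟨p.reverse.getVert 1, p.reverse.adj_snd
        (SimpleGraph.Walk.not_nil_of_ne (Ne.symm hw))⟩
    choose u hu using hnbr
    -- total dominating sets exist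
    have htne : {n | ∃ D : Set V, IsTotalDomSet G D ∧ D.ncard = n}.Nonempty := by
      refine ⟨(Set.univ : Set V).ncard, Set.univ, fun v => ?_, rfl⟩
      exact ⟨u v, Set.mem_univ _, hu v⟩
    -- γ(G∘H) ≤ γ_t(G)
    have hle1 : gammaDom (G.lexProd H) ≤ gammaTotalDom G := by
      obtain ⟨Dt, hDt, hDtcard⟩ := Nat.sInf_mem htne
      have hdom : IsDomSet (G.lexProd H) ((fun v => (v, w0)) '' Dt) := by
        rintro ⟨g, h⟩ _
        obtain ⟨a, ha, hadj⟩ := hDt g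
        exact ⟨(a, w0), ⟨a, ha, rfl⟩, Or.inl hadj⟩
      have hinj : Function.Injective (fun v : V => (v, w0)) := fun a b h => by
        simpa using congrArg Prod.fst h
      calc gammaDom (G.lexProd H) ≤ ((fun v => (v, w0)) '' Dt).ncard :=
            Nat.sInf_le ⟨_, hdom, rfl⟩
        _ = Dt.ncard := Set.ncard_image_of_injective Dt hinj
        _ = gammaTotalDom G := hDtcard
    -- γ_t(G) ≤ γ(G∘H)
    set B : Set V := {v : V | ∀ a ∈ A, ¬ G.Adj v a} with hB
    have hBA : B ⊆ A := by
      intro v hv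
      by_cases hvD : (v, w0) ∈ D'
      · exact ⟨(v, w0), hvD, rfl⟩
      · obtain ⟨⟨a, h'⟩, haD, hadj⟩ := hD' _ hvD
        rcases hadj with h | ⟨h, _⟩
        · exact absurd h (hv a ⟨(a, h'), haD, rfl⟩)
        · exact ⟨(a, h'), haD, h.symm⟩
    -- the set T
    set T : Set V := A ∪ u '' B with hT
    have hTdom : IsTotalDomSet G T := by
      intro v
      by_cases hvB : v ∈ B
      · exact ⟨u v, Or.inr ⟨v, hvB, rfl⟩, hu v⟩
      · simp only [hB, Set.mem_setOf_eq, not_forall] at hvB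
        obtain ⟨a, ha, hadj⟩ := hvB
        exact ⟨a, Or.inl ha, not_not.mp hadj⟩
    -- counting
    set F : Finset (V × W) := (D'.toFinite).toFinset with hF
    have hmemF : ∀ p, p ∈ F ↔ p ∈ D' := fun p => Set.Finite.mem_toFinset _
    have hcardsum : F.card = ∑ v : V, (F.filter (fun p => p.1 = v)).card :=
      Finset.card_eq_sum_card_fiberwise (fun x _ => Finset.mem_univ x.1)
    -- each v ∈ B has at least 2 elements in its fiber
    have hfib2 : ∀ v ∈ B, 2 ≤ (F.filter (fun p => p.1 = v)).card := by
      intro v hv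
      set Sv : Set W := Prod.snd '' {p ∈ D' | p.1 = v} with hSv
      have hSvdom : IsDomSet H Sv := by
        intro h hh
        have hvD : (v, h) ∉ D' := fun hmem => hh ⟨(v, h), ⟨hmem, rfl⟩, rfl⟩
        obtain ⟨⟨a, h'⟩, haD, hadj⟩ := hD' _ hvD
        rcases hadj with hga | ⟨hva, hHa⟩
        · exact absurd hga (hv a ⟨(a, h'), haD, rfl⟩)
        · exact ⟨h', ⟨(a, h'), ⟨haD, hva.symm⟩, rfl⟩, hHa⟩
      have h1 : gammaDom H ≤ Sv.ncard := Nat.sInf_le ⟨Sv, hSvdom, rfl⟩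
      have h2 : Sv.ncard ≤ {p ∈ D' | p.1 = v}.ncard :=
        Set.ncard_image_le (Set.toFinite _)
      have h3 : {p ∈ D' | p.1 = v} = ↑(F.filter (fun p => p.1 = v)) := by
        ext p
        simp [hmemF p, Set.mem_setOf_eq]
      rw [h3, Set.ncard_coe_finset] at h2
      omega
    have hfib1 : ∀ v ∈ A, 1 ≤ (F.filter (fun p => p.1 = v)).card := by
      rintro v ⟨p, hp, rfl⟩
      have : p ∈ F.filter (fun q => q.1 = p.1) := by
        simp [hmemF p, hp]
      exact Finset.card_pos.mpr ⟨p, this⟩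
    set AF : Finset V := (A.toFinite).toFinset with hAF
    set BF : Finset V := (B.toFinite).toFinset with hBF
    have hmemAF : ∀ v, v ∈ AF ↔ v ∈ A := fun v => Set.Finite.mem_toFinset _
    have hmemBF : ∀ v, v ∈ BF ↔ v ∈ B := fun v => Set.Finite.mem_toFinset _
    have hsum1 : ∑ v ∈ AF, (F.filter (fun p => p.1 = v)).card ≤
        ∑ v : V, (F.filter (fun p => p.1 = v)).card :=
      Finset.sum_le_sum_of_subset (Finset.subset_univ _)
    have hsum2 : ∑ v ∈ AF, (if v ∈ BF then 2 else 1) ≤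
        ∑ v ∈ AF, (F.filter (fun p => p.1 = v)).card := by
      apply Finset.sum_le_sum
      intro v hv
      by_cases hvB : v ∈ BF
      · simp only [hvB, if_true]
        exact hfib2 v ((hmemBF v).mp hvB)
      · simp only [hvB, if_false]
        exact hfib1 v ((hmemAF v).mp hv)
    have hsum3 : ∑ v ∈ AF, (if v ∈ BF then 2 else 1) = AF.card + BF.card := by
      have : ∀ v, (if v ∈ BF then 2 else 1) = 1 + (if v ∈ BF then 1 else 0) := by
        intro v; by_cases h : v ∈ BF <;> simp [h]
      have hfil : AF.filter (fun v => v ∈ BF) = BF := by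
        ext v
        simp only [Finset.mem_filter]
        constructor
        · exact fun h => h.2
        · intro h
          exact ⟨(hmemAF v).mpr (hBA ((hmemBF v).mp h)), h⟩
      rw [Finset.sum_congr rfl (fun v _ => this v), Finset.sum_add_distrib,
        Finset.sum_const, smul_eq_mul, mul_one, ← Finset.card_filter, hfil]
    have hTcard : T.ncard ≤ AF.card + BF.card := by
      have h1 : T.ncard ≤ A.ncard + (u '' B).ncard :=
        Set.ncard_union_le A (u '' B)
      have h2 : (u '' B).ncard ≤ B.ncard := Set.ncard_image_le (Set.toFinite _)
      have h3 : A.ncard = AF.card := Set.ncard_eq_toFinset_card A (A.toFinite)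
      have h4 : B.ncard = BF.card := Set.ncard_eq_toFinset_card B (B.toFinite)
      omega
    have hD'F : D'.ncard = F.card := Set.ncard_eq_toFinset_card D' (D'.toFinite)
    have hle2 : gammaTotalDom G ≤ gammaDom (G.lexProd H) := by
      calc gammaTotalDom G ≤ T.ncard := Nat.sInf_le ⟨T, hTdom, rfl⟩
        _ ≤ AF.card + BF.card := hTcard
        _ ≤ ∑ v ∈ AF, (F.filter (fun p => p.1 = v)).card := hsum3 ▸ hsum2
        _ ≤ ∑ v : V, (F.filter (fun p => p.1 = v)).card := hsum1
        _ = F.card := hcardsum.symm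
        _ = D'.ncard := hD'F.symm
        _ = gammaDom (G.lexProd H) := hD'card
    omega
end

section
/- Let G be a connected finite simple graph with at least two vertices and H a nonempty finite simple graph. Then the lexicographic product G∘H has a total dominating set and γ_t(G∘H) = γ_t(G). -/
open SimpleGraph

lemma exists_nbr {V : Type*} [Fintype V] (G : SimpleGraph V) (hconn : G.Connected)
    (hcard : 2 ≤ Fintype.card V) (v : V) : ∃ u, G.Adj v u := by
  obtain ⟨u, hu⟩ := Fintype.exists_ne_of_one_lt_card (by omega) v
  obtain ⟨p⟩ := hconn v u
  cases p with
  | nil => exact absurd rfl hu.symm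
  | cons h _ => exact ⟨_, h⟩

lemma key {V W : Type*} [Fintype V] [Fintype W] (G : SimpleGraph V) (H : SimpleGraph W)
    (hnbr : ∀ v : V, ∃ u, G.Adj v u) (w0 : W) (D' : Set (V × W))
    (hD' : IsTotalDomSet (G.lexProd H) D') :
    ∃ D : Set V, IsTotalDomSet G D ∧ D.ncard ≤ D'.ncard := by
  classical
  set P : Set V := Prod.fst '' D' with hP
  set Bad : Set V := {v | ∀ p ∈ P, ¬ G.Adj v p} with hBad
  have hbad2 : ∀ v ∈ Bad, ∃ w₁ w₂ : W, w₁ ≠ w₂ ∧ (v, w₁) ∈ D' ∧ (v, w₂) ∈ D' := by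
    intro v hv
    obtain ⟨q, hqD, hq⟩ := hD' (v, w0)
    rcases hq with h | ⟨he, _⟩
    · exact absurd h (hv q.1 ⟨q, hqD, rfl⟩)
    · obtain ⟨r, hrD, hr⟩ := hD' q
      rcases hr with h | ⟨he', hH⟩
      · rw [← he] at h
        exact absurd h (hv r.1 ⟨r, hrD, rfl⟩)
      · have hv1 : v = q.1 := he
        have hv2 : v = r.1 := hv1.trans he'
        refine ⟨q.2, r.2, H.ne_of_adj hH, ?_, ?_⟩
        · rw [hv1, Prod.mk.eta]; exact hqD
        · rw [hv2, Prod.mk.eta]; exact hrD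
  have hBadP : Bad ⊆ P := by
    intro v hv
    obtain ⟨w₁, _, _, h₁, _⟩ := hbad2 v hv
    exact ⟨(v, w₁), h₁, rfl⟩
  choose u hu using hnbr
  refine ⟨P ∪ u '' Bad, ?_, ?_⟩
  · intro v
    by_cases hv : v ∈ Bad
    · exact ⟨u v, Or.inr ⟨v, hv, rfl⟩, hu v⟩
    · simp only [hBad, Set.mem_setOf_eq, not_forall] at hv
      obtain ⟨p, hp, hadj⟩ := hv
      exact ⟨p, Or.inl hp, not_not.mp hadj⟩
  · -- cardinality
    have hφex : ∀ v : V, ∃ q : V × W, v ∈ P → (q ∈ D' ∧ q.1 = v) := by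
      intro v
      by_cases h : v ∈ P
      · obtain ⟨q, hq, hq1⟩ := h
        exact ⟨q, fun _ => ⟨hq, hq1⟩⟩
      · exact ⟨(v, w0), fun h' => absurd h' h⟩
    choose φ hφ using hφex
    have hψex : ∀ v : V, ∃ q : V × W, v ∈ Bad → (q ∈ D' ∧ q.1 = v ∧ q ≠ φ v) := by
      intro v
      by_cases h : v ∈ Bad
      · obtain ⟨w₁, w₂, hne, h₁, h₂⟩ := hbad2 v h
        by_cases he : (v, w₁) = φ v
        · refine ⟨(v, w₂), fun _ => ⟨h₂, rfl, ?_⟩⟩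
          rw [← he]
          simp [hne.symm]
        · exact ⟨(v, w₁), fun _ => ⟨h₁, rfl, he⟩⟩
      · exact ⟨(v, w0), fun h' => absurd h' h⟩
    choose ψ hψ using hψex
    have hρex : ∀ x : V, ∃ v : V, x ∈ u '' Bad → (v ∈ Bad ∧ u v = x) := by
      intro x
      by_cases h : x ∈ u '' Bad
      · obtain ⟨v, hv, hvx⟩ := h
        exact ⟨v, fun _ => ⟨hv, hvx⟩⟩
      · exact ⟨x, fun h' => absurd h' h⟩
    choose ρ hρ using hρex
    set f : V → V × W := fun x => if x ∈ P then φ x else ψ (ρ x) with hf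
    have hnotP : ∀ x, x ∉ P → x ∈ u '' Bad → f x = ψ (ρ x) := by
      intro x hx _; simp [hf, hx]
    have hfst : ∀ x ∈ P ∪ u '' Bad, x ∉ P → (f x).1 = ρ x ∧ ρ x ∈ Bad := by
      intro x hx hxP
      have hxu : x ∈ u '' Bad := hx.resolve_left hxP
      obtain ⟨hρB, _⟩ := hρ x hxu
      rw [hnotP x hxP hxu]
      exact ⟨(hψ (ρ x) hρB).2.1, hρB⟩
    apply Set.ncard_le_ncard_of_injOn f
    · intro x hx
      by_cases hxP : x ∈ P
      · simp only [hf, if_pos hxP]; exact (hφ x hxP).1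
      · have hxu : x ∈ u '' Bad := hx.resolve_left hxP
        rw [hnotP x hxP hxu]
        exact (hψ (ρ x) (hρ x hxu).1).1
    · intro x hx y hy hxy
      by_contra hne
      by_cases hxP : x ∈ P <;> by_cases hyP : y ∈ P
      · -- both in P : fst differ
        have h1 : (f x).1 = x := by simp only [hf, if_pos hxP]; exact (hφ x hxP).2
        have h2 : (f y).1 = y := by simp only [hf, if_pos hyP]; exact (hφ y hyP).2
        exact hne (h1 ▸ h2 ▸ congrArg Prod.fst hxy)
      · -- x ∈ P, y ∉ P
        obtain ⟨h2, hρB⟩ := hfst y hy hyP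
        have h1 : (f x).1 = x := by simp only [hf, if_pos hxP]; exact (hφ x hxP).2
        have hρy : ρ y = x := by rw [← h2, ← h1, hxy]
        have hyu : y ∈ u '' Bad := hy.resolve_left hyP
        have : f y ≠ φ x := by
          rw [hnotP y hyP hyu, ← hρy]
          exact (hψ (ρ y) hρB).2.2
        rw [← hxy] at this
        exact this (by simp [hf, if_pos hxP])
      · -- symmetric
        obtain ⟨h2, hρB⟩ := hfst x hx hxP
        have h1 : (f y).1 = y := by simp only [hf, if_pos hyP]; exact (hφ y hyP).2
        have hρx : ρ x = y := by rw [← h2, ← h1, hxy]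
        have hxu : x ∈ u '' Bad := hx.resolve_left hxP
        have : f x ≠ φ y := by
          rw [hnotP x hxP hxu, ← hρx]
          exact (hψ (ρ x) hρB).2.2
        rw [hxy] at this
        exact this (by simp [hf, if_pos hyP])
      · -- both ∉ P
        obtain ⟨h1, hB1⟩ := hfst x hx hxP
        obtain ⟨h2, hB2⟩ := hfst y hy hyP
        have hρeq : ρ x = ρ y := by rw [← h1, ← h2, hxy]
        have hxu : x ∈ u '' Bad := hx.resolve_left hxP
        have hyu : y ∈ u '' Bad := hy.resolve_left hyP
        have : x = y := by rw [← (hρ x hxu).2, ← (hρ y hyu).2, hρeq]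
        exact hne this

lemma lift_tds {V W : Type*} (G : SimpleGraph V) (H : SimpleGraph W) (w0 : W)
    (D : Set V) (hD : IsTotalDomSet G D) :
    IsTotalDomSet (G.lexProd H) ((fun v => (v, w0)) '' D) ∧
      ((fun v => (v, w0)) '' D).ncard = D.ncard := by
  constructor
  · rintro ⟨v, w⟩
    obtain ⟨u, huD, hadj⟩ := hD v
    exact ⟨(u, w0), ⟨u, huD, rfl⟩, Or.inl hadj⟩
  · exact Set.ncard_image_of_injective D (fun a b h => (Prod.mk.injEq _ _ _ _).mp h |>.1)

/-- Let `G` be connected with at least two vertices and `H` nonempty.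
Then `G∘H` has a total dominating set and `γ_t(G∘H) = γ_t(G)`. -/
theorem stmt17 {V W : Type*} [Fintype V] [Fintype W] (G : SimpleGraph V)
    (H : SimpleGraph W) (hconn : G.Connected) (hcard : 2 ≤ Fintype.card V)
    (hW : Nonempty W) :
    (∃ D : Set (V × W), IsTotalDomSet (G.lexProd H) D) ∧
      gammaTotalDom (G.lexProd H) = gammaTotalDom G := by
  obtain ⟨w0⟩ := hW
  have hnbr : ∀ v : V, ∃ u, G.Adj v u := exists_nbr G hconn hcard
  have hunivG : IsTotalDomSet G (Set.univ : Set V) := by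
    intro v
    obtain ⟨u, hu⟩ := hnbr v
    exact ⟨u, Set.mem_univ u, hu⟩
  have hlift := lift_tds G H w0 Set.univ hunivG
  have hAne : {n | ∃ D : Set V, IsTotalDomSet G D ∧ D.ncard = n}.Nonempty :=
    ⟨_, Set.univ, hunivG, rfl⟩
  have hBne : {n | ∃ D : Set (V × W), IsTotalDomSet (G.lexProd H) D ∧ D.ncard = n}.Nonempty :=
    ⟨_, _, hlift.1, rfl⟩
  refine ⟨⟨_, hlift.1⟩, le_antisymm ?_ ?_⟩
  · -- γ_t(G∘H) ≤ γ_t(G)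
    obtain ⟨DG, hDG, hcardA⟩ := Nat.sInf_mem hAne
    obtain ⟨h1, h2⟩ := lift_tds G H w0 DG hDG
    exact Nat.sInf_le ⟨_, h1, by rw [h2, hcardA]; rfl⟩
  · -- γ_t(G) ≤ γ_t(G∘H)
    obtain ⟨D', hD', hcardB⟩ := Nat.sInf_mem hBne
    obtain ⟨D, hD, hle⟩ := key G H hnbr w0 D' hD'
    calc gammaTotalDom G ≤ D.ncard := Nat.sInf_le ⟨D, hD, rfl⟩
      _ ≤ D'.ncard := hle
      _ = _ := hcardB.trans rfl
end
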